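/- Let v be an even positive integer. In the polynomial ring ℝ[G₁,…,G_v,H₁,…,H_v], the polynomial (1/C(v,v/2)) · Σ_{T ⊆ {1,…,v}, |T| = v/2} (∏_{i∈T} Gᵢ² · ∏_{i∉T} Hᵢ²) − ∏_{i=1}^{v} Gᵢ Hᵢ is a sum of squares of polynomials, each of degree at most v. -/
import Mathlib


open MvPolynomial

/-- For even `v ≥ 1`, in `ℝ[G₁,…,G_v,H₁,…,H_v]` (with `Gᵢ = X (Sum.inl i)`,
`Hᵢ = X (Sum.inr i)`), the polynomial
`(1/C(v,v/2)) Σ_{T ⊆ [v], |T| = v/2} (∏_{i∈T} Gᵢ² ∏_{i∉T} Hᵢ²) − ∏_{i=1}^{v} Gᵢ Hᵢ`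
is a sum of squares of polynomials, each of degree at most `v`. -/
theorem stmt_1 (v : ℕ) (hv : 1 ≤ v) (hev : Even v) :
    ∃ (m : ℕ) (q : Fin m → MvPolynomial (Fin v ⊕ Fin v) ℝ),
      (∀ j, (q j).totalDegree ≤ v) ∧
      C ((v.choose (v/2) : ℝ))⁻¹ *
          ∑ T ∈ Finset.univ.powerset.filter (fun T : Finset (Fin v) => T.card = v/2),
            (∏ i ∈ T, (X (Sum.inl i))^2) * ∏ i ∈ Tᶜ, (X (Sum.inr i))^2
        - ∏ i : Fin v, (X (Sum.inl i) * X (Sum.inr i))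
      = ∑ j, (q j)^2 := by
  classical
  set S : Finset (Finset (Fin v)) :=
    Finset.univ.powerset.filter (fun T : Finset (Fin v) => T.card = v/2) with hS
  have h2 : v % 2 = 0 := Nat.even_iff.mp hev
  have hvv : v - v / 2 = v / 2 := by omega
  -- the basic monomials
  set A : Finset (Fin v) → MvPolynomial (Fin v ⊕ Fin v) ℝ :=
    fun T => (∏ i ∈ T, X (Sum.inl i)) * ∏ i ∈ Tᶜ, X (Sum.inr i) with hA
  set Pbig : MvPolynomial (Fin v ⊕ Fin v) ℝ :=
    ∏ i : Fin v, (X (Sum.inl i) * X (Sum.inr i)) with hPbig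
  have hnpos : (0:ℝ) < (v.choose (v/2) : ℝ) := by
    exact_mod_cast Nat.choose_pos (Nat.div_le_self v 2)
  set n : ℝ := (v.choose (v/2) : ℝ) with hn
  have hn0 : n ≠ 0 := ne_of_gt hnpos
  set r : ℝ := Real.sqrt ((2*n)⁻¹) with hr
  have hr2 : r ^ 2 = (2*n)⁻¹ := Real.sq_sqrt (by positivity)
  set f : Finset (Fin v) → MvPolynomial (Fin v ⊕ Fin v) ℝ :=
    fun T => C r * (A T - A Tᶜ) with hf
  -- S is closed under complement
  have hmem : ∀ T, T ∈ S ↔ T.card = v / 2 := by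
    intro T; simp [hS]
  have hcompl : ∀ T ∈ S, Tᶜ ∈ S := by
    intro T hT
    rw [hmem] at hT ⊢
    rw [Finset.card_compl, Fintype.card_fin, hT, hvv]
  -- product identity
  have hprod : ∀ T : Finset (Fin v), A T * A Tᶜ = Pbig := by
    intro T
    have : A T * A Tᶜ =
        ((∏ i ∈ T, X (Sum.inl i)) * ∏ i ∈ Tᶜ, X (Sum.inl i)) *
        ((∏ i ∈ T, (X (Sum.inr i) : MvPolynomial (Fin v ⊕ Fin v) ℝ)) * ∏ i ∈ Tᶜ, X (Sum.inr i)) := by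
      simp only [hA, compl_compl]; ring
    rw [this, Finset.prod_mul_prod_compl, Finset.prod_mul_prod_compl, hPbig,
      Finset.prod_mul_distrib]
  -- degree bound
  have hdegA : ∀ T : Finset (Fin v), (A T).totalDegree ≤ v := by
    intro T
    refine (totalDegree_mul _ _).trans ?_
    have h1 : (∏ i ∈ T, (X (Sum.inl i) : MvPolynomial (Fin v ⊕ Fin v) ℝ)).totalDegree ≤ T.card := by
      refine (totalDegree_finset_prod _ _).trans ?_
      simp [totalDegree_X]
    have h2' : (∏ i ∈ Tᶜ, (X (Sum.inr i) : MvPolynomial (Fin v ⊕ Fin v) ℝ)).totalDegree ≤ Tᶜ.card := by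
      refine (totalDegree_finset_prod _ _).trans ?_
      simp [totalDegree_X]
    calc _ ≤ T.card + Tᶜ.card := Nat.add_le_add h1 h2'
      _ = v := by rw [Finset.card_add_card_compl, Fintype.card_fin]
  have hdegf : ∀ T : Finset (Fin v), (f T).totalDegree ≤ v := by
    intro T
    refine (totalDegree_mul _ _).trans ?_
    rw [totalDegree_C, Nat.zero_add]
    exact (totalDegree_sub _ _).trans (max_le (hdegA T) (hdegA Tᶜ))
  -- each summand is A T ^ 2
  have hsq : ∀ T : Finset (Fin v),
      (∏ i ∈ T, (X (Sum.inl i) : MvPolynomial (Fin v ⊕ Fin v) ℝ)^2) *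
        ∏ i ∈ Tᶜ, (X (Sum.inr i))^2 = A T ^ 2 := by
    intro T
    rw [hA, mul_pow, Finset.prod_pow, Finset.prod_pow]
  -- cardinality of S
  have hcard : (S.card : ℝ) = n := by
    rw [hS, ← Finset.powersetCard_eq_filter, Finset.card_powersetCard, Finset.card_univ,
      Fintype.card_fin, hn]
  -- reindexing of the complement sum
  have hreindex : ∑ T ∈ S, A Tᶜ ^ 2 = ∑ T ∈ S, A T ^ 2 := by
    refine Finset.sum_nbij' (fun T => Tᶜ) (fun T => Tᶜ) hcompl hcompl ?_ ?_ ?_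
    · intro T _; exact compl_compl T
    · intro T _; exact compl_compl T
    · intro T _; rfl
  -- the key sum identity
  have hkey : ∑ T ∈ S, f T ^ 2 =
      C ((2*n)⁻¹) * (2 * (∑ T ∈ S, A T ^ 2) - C (2*n) * Pbig) := by
    have : ∀ T ∈ S, f T ^ 2 = C ((2*n)⁻¹) * (A T ^ 2 + A Tᶜ ^ 2 - 2 * Pbig) := by
      intro T hT
      rw [hf, mul_pow, ← C_pow, hr2]
      congr 1
      rw [sub_sq, mul_assoc, hprod T]
      ring
    rw [Finset.sum_congr rfl this, ← Finset.mul_sum]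
    congr 1
    rw [Finset.sum_sub_distrib, Finset.sum_add_distrib, hreindex, Finset.sum_const,
      nsmul_eq_mul]
    have hcast : ((S.card : ℕ) : MvPolynomial (Fin v ⊕ Fin v) ℝ) = C n := by
      rw [← hcard]; simp
    rw [hcast, C_mul, map_ofNat]
    ring
  -- assemble
  refine ⟨S.card, fun j => f (S.equivFin.symm j), fun j => hdegf _, ?_⟩
  have hsum : ∑ j, f ((S.equivFin.symm j : S) : Finset (Fin v)) ^ 2 = ∑ T ∈ S, f T ^ 2 := by
    rw [← Finset.sum_coe_sort S (fun T => f T ^ 2)]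
    exact Equiv.sum_comp S.equivFin.symm (fun x : S => f (x : Finset (Fin v)) ^ 2)
  rw [hsum, hkey, Finset.sum_congr rfl (fun T _ => hsq T)]
  have h1 : ((2*n)⁻¹ : ℝ) * 2 = n⁻¹ := by field_simp
  have h2' : ((2*n)⁻¹ : ℝ) * (2*n) = 1 := by field_simp
  calc C n⁻¹ * (∑ T ∈ S, A T ^ 2) - Pbig
      = C ((2*n)⁻¹) * C 2 * (∑ T ∈ S, A T ^ 2) - C ((2*n)⁻¹) * C (2*n) * Pbig := by
        rw [← C_mul, ← C_mul, h1, h2', C_1]; ring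
    _ = C ((2*n)⁻¹) * (2 * (∑ T ∈ S, A T ^ 2) - C (2*n) * Pbig) := by
        rw [map_ofNat]; ring
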